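/- Let T be a bounded operator on a complex Hilbert space. Then w(T)² ≤ (1/2)·w(T²) + (1/4)·‖T T* + T* T‖, where w denotes the numerical radius. -/
import Mathlib


open scoped InnerProductSpace
open ContinuousLinearMap
noncomputable section
set_option synthInstance.maxHeartbeats 1000000
set_option maxHeartbeats 1000000

variable {H : Type*} [NormedAddCommGroup H] [InnerProductSpace ℂ H] [CompleteSpace H]

/-- The numerical radius of a bounded operator. -/
noncomputable def numRadius (T : H →L[ℂ] H) : ℝ :=
  sSup {r : ℝ | ∃ x : H, ‖x‖ = 1 ∧ r = ‖(⟪T x, x⟫_ℂ)‖}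

/-- The 2×2 block operator [[X, Y],[Z, W]] on H ⊕ H (ℓ² direct sum). -/
noncomputable def blockOp (X Y Z W : H →L[ℂ] H) :
    WithLp 2 (H × H) →L[ℂ] WithLp 2 (H × H) :=
  ((WithLp.prodContinuousLinearEquiv 2 ℂ H H).symm.toContinuousLinearMap) ∘L
    ((X ∘L ContinuousLinearMap.fst ℂ H H + Y ∘L ContinuousLinearMap.snd ℂ H H).prod
      (Z ∘L ContinuousLinearMap.fst ℂ H H + W ∘L ContinuousLinearMap.snd ℂ H H)) ∘L
    ((WithLp.prodContinuousLinearEquiv 2 ℂ H H).toContinuousLinearMap)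

set_option linter.unusedSectionVars false

lemma numRadius_bddAbove (T : H →L[ℂ] H) :
    BddAbove {r : ℝ | ∃ x : H, ‖x‖ = 1 ∧ r = ‖(⟪T x, x⟫_ℂ)‖} := by
  refine ⟨‖T‖, ?_⟩
  rintro r ⟨x, hx, rfl⟩
  calc ‖⟪T x, x⟫_ℂ‖ ≤ ‖T x‖ * ‖x‖ := norm_inner_le_norm _ _
    _ ≤ ‖T‖ * ‖x‖ * ‖x‖ := by gcongr; exact T.le_opNorm x
    _ = ‖T‖ := by rw [hx]; ring

lemma numRadius_nonneg (T : H →L[ℂ] H) : 0 ≤ numRadius T :=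
  Real.sSup_nonneg (by rintro r ⟨x, hx, rfl⟩; exact norm_nonneg _)

lemma le_numRadius (T : H →L[ℂ] H) {x : H} (hx : ‖x‖ = 1) :
    ‖(⟪T x, x⟫_ℂ)‖ ≤ numRadius T :=
  le_csSup (numRadius_bddAbove T) ⟨x, hx, rfl⟩

lemma key (T : H →L[ℂ] H) {x : H} (hx : ‖x‖ = 1) :
    ‖(⟪T x, x⟫_ℂ)‖ ^ 2 ≤
      (1 / 2) * numRadius (T ^ 2) + (1 / 4) * ‖T * adjoint T + adjoint T * T‖ := by
  set T' := adjoint T with hT'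
  set P := T * T' + T' * T with hP
  set a := ⟪T x, x⟫_ℂ with ha
  by_cases ha0 : a = 0
  · rw [ha0]
    simp only [norm_zero]
    have h1 := numRadius_nonneg (T ^ 2)
    have h2 := norm_nonneg P
    norm_num
    linarith
  · set u : ℂ := a / ‖a‖ with hu
    have hna : (0:ℝ) < ‖a‖ := norm_pos_iff.mpr ha0
    have hnac : ((‖a‖:ℝ) : ℂ) ≠ 0 := by exact_mod_cast hna.ne'
    have hnu : ‖u‖ = 1 := by
      rw [hu, norm_div, Complex.norm_real, Real.norm_of_nonneg (norm_nonneg a)]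
      exact div_self hna.ne'
    have hcu : (starRingEnd ℂ) u * a = (‖a‖ : ℂ) := by
      rw [hu, map_div₀, Complex.conj_ofReal, div_mul_eq_mul_div, mul_comm,
        Complex.mul_conj', div_eq_iff hnac]
      ring
    have huu : (starRingEnd ℂ) u * u = 1 := by
      calc (starRingEnd ℂ) u * u = (‖u‖:ℂ)^2 := by
            rw [mul_comm, Complex.mul_conj']
        _ = 1 := by rw [hnu]; norm_num
    set A : H →L[ℂ] H := u • T + (starRingEnd ℂ) u • T' with hA
    have hAx : A x = u • T x + (starRingEnd ℂ) u • T' x := by simp [hA]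
    have hT'x : ⟪T' x, x⟫_ℂ = (starRingEnd ℂ) a := by
      rw [hT', adjoint_inner_left, ← inner_conj_symm]
    have hA1 : ⟪A x, x⟫_ℂ = 2 * ‖a‖ := by
      rw [hAx, inner_add_left, inner_smul_left, inner_smul_left, hT'x, ← ha, hcu,
        Complex.conj_conj]
      have h : u * (starRingEnd ℂ) a = (starRingEnd ℂ) ((starRingEnd ℂ) u * a) := by
        rw [map_mul, Complex.conj_conj, mul_comm]
      rw [h, hcu, Complex.conj_ofReal]
      ring
    have hA2 : 2 * ‖a‖ ≤ ‖A x‖ := by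
      have h1 : ‖⟪A x, x⟫_ℂ‖ = 2 * ‖a‖ := by
        rw [hA1, show ((2:ℂ) * ‖a‖) = ((2 * ‖a‖ : ℝ) : ℂ) by push_cast; ring,
          Complex.norm_real, Real.norm_of_nonneg (by positivity)]
      calc 2 * ‖a‖ = ‖⟪A x, x⟫_ℂ‖ := h1.symm
        _ ≤ ‖A x‖ * ‖x‖ := norm_inner_le_norm _ _
        _ = ‖A x‖ := by rw [hx, mul_one]
    set b := ⟪(T ^ 2) x, x⟫_ℂ with hb
    have hTT' : ⟪T x, T' x⟫_ℂ = b := by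
      rw [hT', adjoint_inner_right, hb]
      congr 1
    have hT'T : ⟪T' x, T x⟫_ℂ = (starRingEnd ℂ) b := by
      rw [← inner_conj_symm, hTT']
    have hTxTx : ⟪T x, T x⟫_ℂ = ((‖T x‖^2 : ℝ) : ℂ) := by
      rw [inner_self_eq_norm_sq_to_K]; norm_cast
    have hT'xT'x : ⟪T' x, T' x⟫_ℂ = ((‖T' x‖^2 : ℝ) : ℂ) := by
      rw [inner_self_eq_norm_sq_to_K]; norm_cast
    have expand : ⟪A x, A x⟫_ℂ =
        ((‖T x‖^2 + ‖T' x‖^2 : ℝ) : ℂ)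
          + ((starRingEnd ℂ) u)^2 * b + u^2 * (starRingEnd ℂ) b := by
      rw [hAx, inner_add_left, inner_add_right, inner_add_right,
        inner_smul_left, inner_smul_left, inner_smul_left, inner_smul_left,
        inner_smul_right, inner_smul_right, inner_smul_right, inner_smul_right,
        hTT', hT'T, hTxTx, hT'xT'x, Complex.conj_conj]
      have h1 : (starRingEnd ℂ) u * (u * ((‖T x‖^2:ℝ):ℂ)) = ((‖T x‖^2:ℝ):ℂ) := by
        rw [← mul_assoc, huu, one_mul]
      have h2 : u * ((starRingEnd ℂ) u * ((‖T' x‖^2:ℝ):ℂ)) = ((‖T' x‖^2:ℝ):ℂ) := by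
        rw [← mul_assoc, mul_comm u, huu, one_mul]
      rw [h1, h2]
      push_cast
      ring
    have hre : ‖A x‖^2 = (⟪A x, A x⟫_ℂ).re := by
      rw [inner_self_eq_norm_sq_to_K]; norm_cast
    have hnormsum : ‖T x‖^2 + ‖T' x‖^2 = (⟪P x, x⟫_ℂ).re := by
      have e1 : ⟪(T * T') x, x⟫_ℂ = ((‖T' x‖^2 : ℝ) : ℂ) := by
        rw [show (T * T') x = T (T' x) from rfl, ← adjoint_inner_right, ← hT', hT'xT'x]
      have e2 : ⟪(T' * T) x, x⟫_ℂ = ((‖T x‖^2 : ℝ) : ℂ) := by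
        rw [show (T' * T) x = T' (T x) from rfl, hT', adjoint_inner_left, ← hTxTx,
          ← inner_conj_symm, hTxTx, Complex.conj_ofReal]
      rw [hP, ContinuousLinearMap.add_apply, inner_add_left, e1, e2,
        show ((‖T' x‖^2:ℝ):ℂ) + ((‖T x‖^2:ℝ):ℂ) = ((‖T x‖^2 + ‖T' x‖^2 : ℝ) : ℂ)
          by push_cast; ring, Complex.ofReal_re]
    have hPbound : (⟪P x, x⟫_ℂ).re ≤ ‖P‖ := by
      calc (⟪P x, x⟫_ℂ).re ≤ ‖⟪P x, x⟫_ℂ‖ := Complex.re_le_norm _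
        _ ≤ ‖P x‖ * ‖x‖ := norm_inner_le_norm _ _
        _ ≤ ‖P‖ * ‖x‖ * ‖x‖ := by gcongr; exact P.le_opNorm x
        _ = ‖P‖ := by rw [hx]; ring
    have hbbound : ‖b‖ ≤ numRadius (T ^ 2) := le_numRadius _ hx
    have hre2 : (⟪A x, A x⟫_ℂ).re ≤ 2 * numRadius (T ^ 2) + ‖P‖ := by
      rw [expand]
      simp only [Complex.add_re, Complex.ofReal_re]
      have hc1 : (((starRingEnd ℂ) u)^2 * b).re ≤ ‖b‖ := by
        calc (((starRingEnd ℂ) u)^2 * b).re ≤ ‖((starRingEnd ℂ) u)^2 * b‖ :=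
              Complex.re_le_norm _
          _ = ‖(starRingEnd ℂ) u‖^2 * ‖b‖ := by rw [norm_mul, norm_pow]
          _ = ‖b‖ := by rw [RCLike.norm_conj, hnu]; ring
      have hc2 : (u^2 * (starRingEnd ℂ) b).re ≤ ‖b‖ := by
        calc (u^2 * (starRingEnd ℂ) b).re ≤ ‖u^2 * (starRingEnd ℂ) b‖ :=
              Complex.re_le_norm _
          _ = ‖u‖^2 * ‖b‖ := by rw [norm_mul, norm_pow, RCLike.norm_conj]
          _ = ‖b‖ := by rw [hnu]; ring
      nlinarith [hPbound, hbbound, hnormsum]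
    have hfinal : (2 * ‖a‖)^2 ≤ 2 * numRadius (T ^ 2) + ‖P‖ := by
      calc (2 * ‖a‖)^2 ≤ ‖A x‖^2 := by nlinarith [hA2, hna]
        _ = (⟪A x, A x⟫_ℂ).re := hre
        _ ≤ _ := hre2
    nlinarith [hfinal]

theorem numRadius_sq_ineq (T : H →L[ℂ] H) :
    numRadius T ^ 2 ≤
      (1 / 2) * numRadius (T ^ 2) + (1 / 4) * ‖T * adjoint T + adjoint T * T‖ := by
  set c := (1 / 2) * numRadius (T ^ 2) + (1 / 4) * ‖T * adjoint T + adjoint T * T‖ with hc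
  have hc0 : 0 ≤ c := by
    have h1 := numRadius_nonneg (T ^ 2)
    have h2 := norm_nonneg (T * adjoint T + adjoint T * T)
    rw [hc]; linarith
  have h1 : numRadius T ≤ Real.sqrt c := by
    apply Real.sSup_le
    · rintro r ⟨x, hx, rfl⟩
      exact (Real.le_sqrt (norm_nonneg _) hc0).mpr (hc ▸ key T hx)
    · exact Real.sqrt_nonneg _
  calc numRadius T ^ 2 ≤ Real.sqrt c ^ 2 := by
        gcongr
        exact numRadius_nonneg T
    _ = c := Real.sq_sqrt hc0
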